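/- Let a ∈ ℝ, let b ∈ (a, +∞], let ε, ε̃ ∈ {1, -1}, and let q : [a, b) → ℝ be continuously differentiable with q(a) = 0, q(s) ≠ 0 for every s ∈ (a, b), and ε̃·q'(a) ≥ 0. Define h : (a, b) → ℝ by h(s) = 1/q(s). Then there exists δ > 0 and a function w : [a, a+δ) → ℝ, continuous on [a, a+δ) and differentiable on (a, a+δ), such that w(a) = 0 and w'(s) = (ε̃ + ε·w(s)²)·(1 − w(s)·h(s)) for every s ∈ (a, a+δ). -/

import Mathlib

open Set Filter
open MeasureTheory intervalIntegral



namespace BPSaux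

noncomputable def Vex (a s₀ : ℝ) (v : BoundedContinuousFunction (Set.Ioc a s₀) ℝ) : ℝ → ℝ :=
  fun t => if h : t ∈ Set.Ioc a s₀ then v ⟨t, h⟩ else 0

lemma Vex_apply {a s₀ t : ℝ} (v : BoundedContinuousFunction (Set.Ioc a s₀) ℝ)
    (h : t ∈ Set.Ioc a s₀) : Vex a s₀ v t = v ⟨t, h⟩ := dif_pos h

lemma Vex_bound {a s₀ : ℝ} (v : BoundedContinuousFunction (Set.Ioc a s₀) ℝ) (t : ℝ) :
    |Vex a s₀ v t| ≤ ‖v‖ := by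
  unfold Vex
  split
  · rw [← Real.norm_eq_abs]; exact BoundedContinuousFunction.norm_coe_le_norm v _
  · simpa using norm_nonneg v

lemma Vex_diff {a s₀ : ℝ} (v₁ v₂ : BoundedContinuousFunction (Set.Ioc a s₀) ℝ) (t : ℝ) :
    |Vex a s₀ v₁ t - Vex a s₀ v₂ t| ≤ dist v₁ v₂ := by
  unfold Vex
  split
  · rw [← Real.dist_eq]; exact BoundedContinuousFunction.dist_coe_le_dist _
  · simpa using dist_nonneg

lemma Vex_cont {a s₀ : ℝ} (v : BoundedContinuousFunction (Set.Ioc a s₀) ℝ) :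
    ContinuousOn (Vex a s₀ v) (Set.Ioo a s₀) := by
  rw [continuousOn_iff_continuous_restrict]
  have hres : (Set.Ioo a s₀).domRestrict (Vex a s₀ v) =
      (v ∘ fun u : Set.Ioo a s₀ => (⟨u.1, Set.Ioo_subset_Ioc_self u.2⟩ : Set.Ioc a s₀)) := by
    funext u
    simp only [Set.restrict_apply, Function.comp_apply, Vex,
      dif_pos (Set.Ioo_subset_Ioc_self u.2)]
  rw [hres]
  exact v.continuous.comp (Continuous.subtype_mk continuous_subtype_val _)

noncomputable def fv (a s₀ ε ε' : ℝ) (q : ℝ → ℝ)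
    (v : BoundedContinuousFunction (Set.Ioc a s₀) ℝ) : ℝ → ℝ :=
  fun t => ε' + ε * q t ^ 2 * (Vex a s₀ v t) ^ 2 * (1 - Vex a s₀ v t)

lemma fv_bound {a s₀ ε ε' : ℝ} {q : ℝ → ℝ} {v : BoundedContinuousFunction (Set.Ioc a s₀) ℝ}
    (hε1 : |ε| = 1) (hε'1 : |ε'| = 1) {t : ℝ} (hq : |q t| ≤ 1/12) (hv : ‖v‖ ≤ 3) :
    |fv a s₀ ε ε' q v t| ≤ 5/4 := by
  have hV : |Vex a s₀ v t| ≤ 3 := (Vex_bound v t).trans hv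
  have hqnn : (0:ℝ) ≤ |q t| := abs_nonneg _
  have hVnn : (0:ℝ) ≤ |Vex a s₀ v t| := abs_nonneg _
  have h1V : |1 - Vex a s₀ v t| ≤ 4 := by
    calc |1 - Vex a s₀ v t| ≤ |(1:ℝ)| + |Vex a s₀ v t| := abs_sub _ _
    _ ≤ 4 := by rw [abs_one]; linarith
  have h2 : |ε * q t ^ 2 * (Vex a s₀ v t) ^ 2 * (1 - Vex a s₀ v t)| ≤ 1/4 := by
    rw [abs_mul, abs_mul, abs_mul, hε1, one_mul, abs_pow, abs_pow]
    have h3 : |q t| ^ 2 ≤ (1/12)^2 := by nlinarith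
    have h4 : |Vex a s₀ v t| ^ 2 ≤ 9 := by nlinarith
    have h5 : |q t| ^ 2 * |Vex a s₀ v t| ^ 2 ≤ (1/12)^2 * 9 :=
      mul_le_mul h3 h4 (sq_nonneg _) (by positivity)
    calc |q t| ^ 2 * |Vex a s₀ v t| ^ 2 * |1 - Vex a s₀ v t| ≤ ((1/12)^2 * 9) * 4 :=
          mul_le_mul h5 h1V (abs_nonneg _) (by positivity)
      _ ≤ 1/4 := by norm_num
  calc |fv a s₀ ε ε' q v t| ≤ |ε'| + |ε * q t ^ 2 * (Vex a s₀ v t) ^ 2 * (1 - Vex a s₀ v t)| :=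
        abs_add_le _ _
    _ ≤ 5/4 := by rw [hε'1]; linarith

lemma fv_diff {a s₀ ε ε' : ℝ} {q : ℝ → ℝ} {v₁ v₂ : BoundedContinuousFunction (Set.Ioc a s₀) ℝ}
    (hε1 : |ε| = 1) {t : ℝ} (hq : |q t| ≤ 1/12) (hv₁ : ‖v₁‖ ≤ 3) (hv₂ : ‖v₂‖ ≤ 3) :
    |fv a s₀ ε ε' q v₁ t - fv a s₀ ε ε' q v₂ t| ≤ 33/144 * dist v₁ v₂ := by
  set V₁ := Vex a s₀ v₁ t with hV₁def
  set V₂ := Vex a s₀ v₂ t with hV₂def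
  have hb₁ : |V₁| ≤ 3 := (Vex_bound v₁ t).trans hv₁
  have hb₂ : |V₂| ≤ 3 := (Vex_bound v₂ t).trans hv₂
  have hd : |V₁ - V₂| ≤ dist v₁ v₂ := Vex_diff v₁ v₂ t
  have hkey : fv a s₀ ε ε' q v₁ t - fv a s₀ ε ε' q v₂ t
      = ε * q t ^ 2 * ((V₁ - V₂) * ((V₁ + V₂) - (V₁^2 + V₁*V₂ + V₂^2))) := by
    simp only [fv, ← hV₁def, ← hV₂def]; ring
  rw [hkey, abs_mul, abs_mul, hε1, one_mul, abs_mul, abs_pow]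
  have h33 : |(V₁ + V₂) - (V₁^2 + V₁*V₂ + V₂^2)| ≤ 33 := by
    have h1 : |V₁ + V₂| ≤ 6 := by
      calc |V₁ + V₂| ≤ |V₁| + |V₂| := abs_add_le _ _
      _ ≤ 6 := by linarith
    have h2 : |V₁^2 + V₁*V₂ + V₂^2| ≤ 27 := by
      have e1 : |V₁^2| ≤ 9 := by rw [abs_pow]; nlinarith [abs_nonneg V₁]
      have e2 : |V₂^2| ≤ 9 := by rw [abs_pow]; nlinarith [abs_nonneg V₂]
      have e3 : |V₁*V₂| ≤ 9 := by rw [abs_mul]; nlinarith [abs_nonneg V₁, abs_nonneg V₂]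
      calc |V₁^2 + V₁*V₂ + V₂^2| ≤ |V₁^2 + V₁*V₂| + |V₂^2| := abs_add_le _ _
        _ ≤ |V₁^2| + |V₁*V₂| + |V₂^2| := by linarith [abs_add_le (V₁^2) (V₁*V₂)]
        _ ≤ 27 := by linarith
    calc |(V₁ + V₂) - (V₁^2 + V₁*V₂ + V₂^2)| ≤ |V₁ + V₂| + |V₁^2 + V₁*V₂ + V₂^2| := abs_sub _ _
      _ ≤ 33 := by linarith
  have hq2 : |q t|^2 ≤ (1/12)^2 := by nlinarith [abs_nonneg (q t)]
  have hdnn : (0:ℝ) ≤ dist v₁ v₂ := dist_nonneg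
  have habs : (0:ℝ) ≤ |(V₁ + V₂) - (V₁^2 + V₁*V₂ + V₂^2)| := abs_nonneg _
  have h6 : |V₁ - V₂| * |V₁ + V₂ - (V₁ ^ 2 + V₁ * V₂ + V₂ ^ 2)| ≤ dist v₁ v₂ * 33 :=
    mul_le_mul hd h33 habs hdnn
  calc |q t| ^ 2 * (|V₁ - V₂| * |V₁ + V₂ - (V₁ ^ 2 + V₁ * V₂ + V₂ ^ 2)|)
      ≤ (1/12)^2 * (dist v₁ v₂ * 33) := mul_le_mul hq2 h6 (by positivity) (by positivity)
    _ = 33/144 * dist v₁ v₂ := by ring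

end BPSaux
namespace BPSaux

noncomputable def gfun (a s₀ c ε ε' : ℝ) (q μ : ℝ → ℝ)
    (v : BoundedContinuousFunction (Set.Ioc a s₀) ℝ) : ℝ → ℝ :=
  fun t => μ t * fv a s₀ ε ε' q v t

noncomputable def Pfun (a s₀ c ε ε' : ℝ) (q μ : ℝ → ℝ)
    (v : BoundedContinuousFunction (Set.Ioc a s₀) ℝ) : ℝ → ℝ :=
  fun s => ∫ t in c..s, gfun a s₀ c ε ε' q μ v t

noncomputable def TFfun (a s₀ c ε ε' : ℝ) (q μ : ℝ → ℝ)
    (v : BoundedContinuousFunction (Set.Ioc a s₀) ℝ) : ℝ → ℝ :=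
  fun s => (q s * μ s)⁻¹ * Pfun a s₀ c ε ε' q μ v s

lemma engine (a b2 s₀ c ε ε' : ℝ) (q μ : ℝ → ℝ)
    (has : a < s₀) (hsb : s₀ < b2)
    (hε1 : |ε| = 1) (hε'1 : |ε'| = 1)
    (hqa : q a = 0)
    (hqcont : ContinuousOn q (Set.Icc a b2))
    (hqne : ∀ s ∈ Set.Ioo a b2, q s ≠ 0)
    (hqsmall : ∀ s ∈ Set.Icc a b2, |q s| ≤ 1/12)
    (hμpos : ∀ s, 0 < μ s)
    (hμder : ∀ s ∈ Set.Ioo a b2, HasDerivAt μ (μ s * (ε' / q s)) s)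
    (INT : ∀ f : ℝ → ℝ, ContinuousOn f (Set.Ioo a s₀) → (∀ t ∈ Set.Icc a s₀, |f t| ≤ 2) →
        ∀ s ∈ Set.Ioc a s₀, IntervalIntegrable (fun t => μ t * f t) volume c s)
    (ML : ∀ (M : ℝ) (f : ℝ → ℝ), 0 ≤ M → (∀ t ∈ Set.Icc a s₀, |f t| ≤ M) →
        (∀ s ∈ Set.Ioc a s₀, IntervalIntegrable (fun t => μ t * f t) volume c s) →
        ∀ s ∈ Set.Ioc a s₀, |∫ t in c..s, μ t * f t| ≤ 2 * M * (|q s| * μ s)) :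
    ∃ w : ℝ → ℝ, ContinuousOn w (Set.Ico a s₀) ∧ w a = 0 ∧
      ∀ s ∈ Set.Ioo a s₀, HasDerivAt w ((ε' + ε * w s ^ 2) * (1 - w s * (1 / q s))) s := by
  have hIoo : ∀ {s : ℝ}, s ∈ Set.Ioc a s₀ → s ∈ Set.Ioo a b2 :=
    fun h => ⟨h.1, lt_of_le_of_lt h.2 hsb⟩
  have hIccsub : Set.Icc a s₀ ⊆ Set.Icc a b2 := Set.Icc_subset_Icc le_rfl hsb.le
  have hIoosub : Set.Ioo a s₀ ⊆ Set.Ioo a b2 := Set.Ioo_subset_Ioo le_rfl hsb.le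
  have hIocIcc : Set.Ioc a s₀ ⊆ Set.Icc a b2 := fun s hs => ⟨hs.1.le, hs.2.trans hsb.le⟩
  have hμcont : ContinuousOn μ (Set.Ioo a b2) :=
    fun x hx => ((hμder x hx).continuousAt).continuousWithinAt
  -- bounds and integrability for ball elements
  have hfb : ∀ (v : BoundedContinuousFunction (Set.Ioc a s₀) ℝ), ‖v‖ ≤ 3 →
      ∀ t ∈ Set.Icc a s₀, |fv a s₀ ε ε' q v t| ≤ 5/4 :=
    fun v hv t ht => fv_bound hε1 hε'1 (hqsmall t (hIccsub ht)) hv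
  have hfc : ∀ (v : BoundedContinuousFunction (Set.Ioc a s₀) ℝ),
      ContinuousOn (fv a s₀ ε ε' q v) (Set.Ioo a s₀) := by
    intro v
    have hV := Vex_cont v
    have hqc : ContinuousOn q (Set.Ioo a s₀) :=
      hqcont.mono (fun t ht => ⟨ht.1.le, ht.2.le.trans hsb.le⟩)
    exact continuousOn_const.add
      (((continuousOn_const.mul (hqc.pow 2)).mul (hV.pow 2)).mul (continuousOn_const.sub hV))
  have hgint : ∀ (v : BoundedContinuousFunction (Set.Ioc a s₀) ℝ), ‖v‖ ≤ 3 →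
      ∀ s ∈ Set.Ioc a s₀, IntervalIntegrable (gfun a s₀ c ε ε' q μ v) volume c s :=
    fun v hv => INT _ (hfc v) (fun t ht => (hfb v hv t ht).trans (by norm_num))
  have hPbound : ∀ (v : BoundedContinuousFunction (Set.Ioc a s₀) ℝ), ‖v‖ ≤ 3 →
      ∀ s ∈ Set.Ioc a s₀, |Pfun a s₀ c ε ε' q μ v s| ≤ 2 * (5/4) * (|q s| * μ s) :=
    fun v hv => ML (5/4) _ (by norm_num) (hfb v hv) (hgint v hv)
  have hqμne : ∀ s ∈ Set.Ioc a s₀, q s * μ s ≠ 0 :=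
    fun s hs => mul_ne_zero (hqne s (hIoo hs)) (ne_of_gt (hμpos s))
  have hTFcont : ∀ (v : BoundedContinuousFunction (Set.Ioc a s₀) ℝ), ‖v‖ ≤ 3 →
      ContinuousOn (TFfun a s₀ c ε ε' q μ v) (Set.Ioc a s₀) := by
    intro v hv
    have hPcont : ContinuousOn (Pfun a s₀ c ε ε' q μ v) (Set.Ioc a s₀) := by
      intro y hy
      set x := (a + y)/2 with hxdef
      have hax : a < x := by rw [hxdef]; linarith [hy.1]
      have hxy : x < y := by rw [hxdef]; linarith [hy.1]
      have hxmem : x ∈ Set.Ioc a s₀ := ⟨hax, hxy.le.trans hy.2⟩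
      have hxs : x ≤ s₀ := hxmem.2
      have hIx : ∀ z ∈ Set.Icc x s₀, IntervalIntegrable (gfun a s₀ c ε ε' q μ v) volume x z :=
        fun z hz => (hgint v hv x hxmem).symm.trans
          (hgint v hv z ⟨lt_of_lt_of_le hax hz.1, hz.2⟩)
      have hC : ContinuousOn
          (fun z => (∫ t in c..x, gfun a s₀ c ε ε' q μ v t) +
            ∫ t in x..z, gfun a s₀ c ε ε' q μ v t) (Set.Icc x s₀) := by
        apply continuousOn_const.add
        have h := continuousOn_primitive_interval' (hIx s₀ ⟨hxs, le_rfl⟩) Set.left_mem_uIcc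
        rwa [Set.uIcc_of_le hxs] at h
      have hEq : ∀ z ∈ Set.Icc x s₀,
          (fun z => (∫ t in c..x, gfun a s₀ c ε ε' q μ v t) +
            ∫ t in x..z, gfun a s₀ c ε ε' q μ v t) z = Pfun a s₀ c ε ε' q μ v z := by
        intro z hz
        exact integral_add_adjacent_intervals (hgint v hv x hxmem) (hIx z hz)
      have hy' : y ∈ Set.Icc x s₀ := ⟨hxy.le, hy.2⟩
      refine ((hC.congr (fun z hz => (hEq z hz).symm)) y hy').mono_of_mem_nhdsWithin ?_
      exact mem_nhdsWithin.2 ⟨Set.Ioi x, isOpen_Ioi, hxy, fun z hz => ⟨hz.1.le, hz.2.2⟩⟩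
    exact (ContinuousOn.inv₀
      ((hqcont.mono hIocIcc).mul (hμcont.mono (fun s hs => hIoo hs))) hqμne).mul hPcont
  have hTFb : ∀ (v : BoundedContinuousFunction (Set.Ioc a s₀) ℝ), ‖v‖ ≤ 3 →
      ∀ s ∈ Set.Ioc a s₀, |TFfun a s₀ c ε ε' q μ v s| ≤ 5/2 := by
    intro v hv s hs
    have h1 : 0 < |q s| * μ s := mul_pos (abs_pos.2 (hqne s (hIoo hs))) (hμpos s)
    have h2 := hPbound v hv s hs
    rw [TFfun, abs_mul, abs_inv, abs_mul, abs_of_pos (hμpos s)]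
    rw [inv_mul_le_iff₀ h1]
    calc |Pfun a s₀ c ε ε' q μ v s| ≤ 2 * (5/4) * (|q s| * μ s) := h2
      _ = |q s| * μ s * (5/2) := by ring
  -- the ball and the operator
  haveI : Nonempty (Metric.closedBall (0 : BoundedContinuousFunction (Set.Ioc a s₀) ℝ) 3) :=
    ⟨⟨0, Metric.mem_closedBall_self (by norm_num)⟩⟩
  haveI : CompleteSpace (Metric.closedBall (0 : BoundedContinuousFunction (Set.Ioc a s₀) ℝ) 3) :=
    IsClosed.completeSpace_coe (hs := Metric.isClosed_closedBall)
  let T : Metric.closedBall (0 : BoundedContinuousFunction (Set.Ioc a s₀) ℝ) 3 →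
      Metric.closedBall (0 : BoundedContinuousFunction (Set.Ioc a s₀) ℝ) 3 := fun v =>
    ⟨BoundedContinuousFunction.ofNormedAddCommGroup
        ((Set.Ioc a s₀).domRestrict (TFfun a s₀ c ε ε' q μ v.1))
        (continuousOn_iff_continuous_restrict.mp (hTFcont v.1 (mem_closedBall_zero_iff.mp v.2)))
        (5/2)
        (fun x => by
          rw [Set.restrict_apply, Real.norm_eq_abs]
          exact hTFb v.1 (mem_closedBall_zero_iff.mp v.2) x.1 x.2),
     mem_closedBall_zero_iff.mpr
       ((BoundedContinuousFunction.norm_ofNormedAddCommGroup_le _ (by norm_num) _).trans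
         (by norm_num))⟩
  have hTcoe : ∀ (v : Metric.closedBall (0 : BoundedContinuousFunction (Set.Ioc a s₀) ℝ) 3)
      (x : Set.Ioc a s₀), ((T v).1 : BoundedContinuousFunction (Set.Ioc a s₀) ℝ) x
        = TFfun a s₀ c ε ε' q μ v.1 x.1 := fun v x => rfl
  have hcontr : ContractingWith (⟨11/24, by norm_num⟩ : NNReal) T := by
    constructor
    · exact (show (11/24:ℝ) < 1 by norm_num)
    · apply LipschitzWith.of_dist_le_mul
      intro u v
      have hu3 : ‖u.1‖ ≤ 3 := mem_closedBall_zero_iff.mp u.2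
      have hv3 : ‖v.1‖ ≤ 3 := mem_closedBall_zero_iff.mp v.2
      rw [Subtype.dist_eq (T u) (T v), Subtype.dist_eq u v]
      show dist (T u).1 (T v).1 ≤ (11/24 : ℝ) * dist u.1 v.1
      have hd0 : (0:ℝ) ≤ 11/24 * dist u.1 v.1 := by positivity
      rw [BoundedContinuousFunction.dist_le hd0]
      intro x
      rw [hTcoe u x, hTcoe v x, Real.dist_eq]
      have hsub : ∀ s ∈ Set.Ioc a s₀, IntervalIntegrable
          (fun t => μ t * (fv a s₀ ε ε' q u.1 t - fv a s₀ ε ε' q v.1 t)) volume c s := by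
        intro s hs
        have h := (hgint u.1 hu3 s hs).sub (hgint v.1 hv3 s hs)
        have he : (fun t => gfun a s₀ c ε ε' q μ u.1 t - gfun a s₀ c ε ε' q μ v.1 t)
            = (fun t => μ t * (fv a s₀ ε ε' q u.1 t - fv a s₀ ε ε' q v.1 t)) := by
          funext t; simp [gfun, mul_sub]
        rwa [he] at h
      have hfd : ∀ t ∈ Set.Icc a s₀,
          |fv a s₀ ε ε' q u.1 t - fv a s₀ ε ε' q v.1 t| ≤ 33/144 * dist u.1 v.1 :=
        fun t ht => fv_diff hε1 (hqsmall t (hIccsub ht)) hu3 hv3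
      have hML := ML (33/144 * dist u.1 v.1) _ (by positivity) hfd hsub x.1 x.2
      have hPd : Pfun a s₀ c ε ε' q μ u.1 x.1 - Pfun a s₀ c ε ε' q μ v.1 x.1
          = ∫ t in c..x.1, μ t * (fv a s₀ ε ε' q u.1 t - fv a s₀ ε ε' q v.1 t) := by
        have h2 := intervalIntegral.integral_sub (hgint u.1 hu3 x.1 x.2) (hgint v.1 hv3 x.1 x.2)
        rw [Pfun, Pfun, ← h2]
        congr 1
        funext t; simp [gfun, mul_sub]
      have hq0 : 0 < |q x.1| * μ x.1 := mul_pos (abs_pos.2 (hqne x.1 (hIoo x.2))) (hμpos x.1)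
      calc |TFfun a s₀ c ε ε' q μ u.1 x.1 - TFfun a s₀ c ε ε' q μ v.1 x.1|
          = |(q x.1 * μ x.1)⁻¹| * |Pfun a s₀ c ε ε' q μ u.1 x.1 - Pfun a s₀ c ε ε' q μ v.1 x.1| := by
            rw [TFfun, TFfun]; rw [← mul_sub, abs_mul]
        _ = (|q x.1| * μ x.1)⁻¹ *
            |Pfun a s₀ c ε ε' q μ u.1 x.1 - Pfun a s₀ c ε ε' q μ v.1 x.1| := by
            rw [abs_inv, abs_mul, abs_of_pos (hμpos _)]
        _ ≤ (|q x.1| * μ x.1)⁻¹ * (2 * (33/144 * dist u.1 v.1) * (|q x.1| * μ x.1)) := by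
            apply mul_le_mul_of_nonneg_left _ (by positivity)
            rw [hPd]; exact hML
        _ = 11/24 * dist u.1 v.1 := by
            rw [mul_comm (2 * _) _, ← mul_assoc, inv_mul_cancel₀ hq0.ne', one_mul]; ring
  -- the fixed point
  set vh := ContractingWith.fixedPoint T hcontr with hvhdef
  have hfix : T vh = vh := hcontr.fixedPoint_isFixedPt
  have hvh3 : ‖vh.1‖ ≤ 3 := mem_closedBall_zero_iff.mp vh.2
  have hid : ∀ t (ht : t ∈ Set.Ioc a s₀),
      Vex a s₀ vh.1 t = TFfun a s₀ c ε ε' q μ vh.1 t := by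
    intro t ht
    rw [Vex_apply _ ht]
    conv_lhs => rw [← hfix]
    exact hTcoe vh ⟨t, ht⟩
  -- the solution
  refine ⟨fun t => q t * Vex a s₀ vh.1 t, ?_, ?_, ?_⟩
  · -- continuity on Ico a s₀
    intro y hy
    rcases eq_or_lt_of_le hy.1 with heq | hay
    · -- y = a
      subst heq
      rw [ContinuousWithinAt, hqa, zero_mul]
      have hb : ∀ᶠ t in nhdsWithin a (Set.Ico a s₀), ‖q t * Vex a s₀ vh.1 t‖ ≤ 3 * |q t| := by
        filter_upwards [self_mem_nhdsWithin] with t _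
        rw [Real.norm_eq_abs, abs_mul, mul_comm]
        exact mul_le_mul_of_nonneg_right ((Vex_bound vh.1 t).trans hvh3) (abs_nonneg _)
      apply squeeze_zero_norm' hb
      have h1 : ContinuousWithinAt q (Set.Icc a b2) a := hqcont a ⟨le_rfl, (has.trans hsb).le⟩
      have h2 : Tendsto q (nhdsWithin a (Set.Ico a s₀)) (nhds 0) := by
        rw [← hqa]
        exact h1.mono_left (nhdsWithin_mono a (fun t ht => ⟨ht.1, (ht.2.le.trans hsb.le)⟩))
      have h3 := (h2.abs.const_mul 3)
      simpa using h3
    · -- a < y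
      have hqa' : ContinuousAt q y := hqcont.continuousAt (Icc_mem_nhds hay (hy.2.trans hsb))
      have hVc : ContinuousAt (Vex a s₀ vh.1) y :=
        (Vex_cont vh.1).continuousAt (Ioo_mem_nhds hay hy.2)
      exact (hqa'.mul hVc).continuousWithinAt
  · -- value at a
    show q a * Vex a s₀ vh.1 a = 0
    rw [hqa, zero_mul]
  · -- the ODE
    intro s hs
    have hsIoc : s ∈ Set.Ioc a s₀ := ⟨hs.1, hs.2.le⟩
    have hsb2 : s ∈ Set.Ioo a b2 := hIoo hsIoc
    have hgcont : ContinuousOn (gfun a s₀ c ε ε' q μ vh.1) (Set.Ioo a s₀) :=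
      (hμcont.mono hIoosub).mul (hfc vh.1)
    have hFTC : HasDerivAt (fun u => ∫ t in c..u, gfun a s₀ c ε ε' q μ vh.1 t)
        (gfun a s₀ c ε ε' q μ vh.1 s) s :=
      intervalIntegral.integral_hasDerivAt_right (hgint vh.1 hvh3 s hsIoc)
        (hgcont.stronglyMeasurableAtFilter isOpen_Ioo s hs)
        (hgcont.continuousAt (Ioo_mem_nhds hs.1 hs.2))
    have hμd := hμder s hsb2
    have hμne : μ s ≠ 0 := ne_of_gt (hμpos s)
    have hqsne : q s ≠ 0 := hqne s hsb2
    have hdiv : HasDerivAt (fun u => Pfun a s₀ c ε ε' q μ vh.1 u / μ u)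
        ((gfun a s₀ c ε ε' q μ vh.1 s * μ s
          - Pfun a s₀ c ε ε' q μ vh.1 s * (μ s * (ε' / q s))) / (μ s)^2) s :=
      hFTC.div hμd hμne
    have hweq : ∀ t, t ∈ Set.Ioc a s₀ → q t * Vex a s₀ vh.1 t
        = Pfun a s₀ c ε ε' q μ vh.1 t / μ t := by
      intro t ht
      rw [hid t ht, TFfun]
      field_simp [hqne t (hIoo ht), ne_of_gt (hμpos t)]
    have hev : (fun t => q t * Vex a s₀ vh.1 t)
        =ᶠ[nhds s] (fun u => Pfun a s₀ c ε ε' q μ vh.1 u / μ u) := by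
      filter_upwards [Ioo_mem_nhds hs.1 hs.2] with t ht
      exact hweq t ⟨ht.1, ht.2.le⟩
    have hw' := hdiv.congr_of_eventuallyEq hev
    have hPs : Pfun a s₀ c ε ε' q μ vh.1 s = q s * Vex a s₀ vh.1 s * μ s := by
      rw [hweq s hsIoc]; field_simp
    have heq : (gfun a s₀ c ε ε' q μ vh.1 s * μ s
          - Pfun a s₀ c ε ε' q μ vh.1 s * (μ s * (ε' / q s))) / (μ s)^2
        = (ε' + ε * (q s * Vex a s₀ vh.1 s) ^ 2) * (1 - (q s * Vex a s₀ vh.1 s) * (1 / q s)) := by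
      rw [hPs, gfun, fv]
      field_simp
      ring
    rw [heq] at hw'
    exact hw'

end BPSaux
namespace BPSaux

lemma core (a b2 ε ε' : ℝ) (q D : ℝ → ℝ)
    (hab : a < b2)
    (hε1 : |ε| = 1) (hε'1 : |ε'| = 1)
    (hqa : q a = 0)
    (hqcont : ContinuousOn q (Set.Icc a b2))
    (hqder : ∀ s ∈ Set.Ioo a b2, HasDerivAt q (D s) s)
    (hqne : ∀ s ∈ Set.Ioo a b2, q s ≠ 0)
    (hqsmall : ∀ s ∈ Set.Icc a b2, |q s| ≤ 1/12)
    (hD : ∀ s ∈ Set.Ioo a b2, -(1/2) ≤ ε' * D s) :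
    ∃ w : ℝ → ℝ, ContinuousOn w (Set.Ico a ((a+b2)/2)) ∧ w a = 0 ∧
      ∀ s ∈ Set.Ioo a ((a+b2)/2),
        HasDerivAt w ((ε' + ε * w s ^ 2) * (1 - w s * (1 / q s))) s := by
  set s₀ := (a + b2)/2 with hs₀def
  have has : a < s₀ := by rw [hs₀def]; linarith
  have hs₀b : s₀ < b2 := by rw [hs₀def]; linarith
  have hs₀mem : s₀ ∈ Set.Ioo a b2 := ⟨has, hs₀b⟩
  have hIoo : ∀ {s : ℝ}, s ∈ Set.Ioc a s₀ → s ∈ Set.Ioo a b2 :=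
    fun h => ⟨h.1, lt_of_le_of_lt h.2 hs₀b⟩
  have hε'ne : ε' ≠ 0 := by intro h; rw [h, abs_zero] at hε'1; norm_num at hε'1
  have hε'sq : ε' * ε' = 1 := by
    have h := sq_abs ε'
    rw [hε'1] at h
    nlinarith [h]
  -- the integrating factor
  set μ : ℝ → ℝ := fun x => Real.exp (∫ t in s₀..x, ε' / q t) with hμdef
  have hμpos : ∀ s, 0 < μ s := fun s => Real.exp_pos _
  have hpcont : ContinuousOn (fun t => ε' / q t) (Set.Ioo a b2) :=
    continuousOn_const.div (hqcont.mono Set.Ioo_subset_Icc_self) hqne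
  have hμder : ∀ x ∈ Set.Ioo a b2, HasDerivAt μ (μ x * (ε' / q x)) x := by
    intro x hx
    have hsub : Set.uIcc s₀ x ⊆ Set.Ioo a b2 := Set.ordConnected_Ioo.uIcc_subset hs₀mem hx
    have hint : IntervalIntegrable (fun t => ε' / q t) volume s₀ x :=
      (hpcont.mono hsub).intervalIntegrable
    have h := intervalIntegral.integral_hasDerivAt_right hint
      (hpcont.stronglyMeasurableAtFilter isOpen_Ioo x hx)
      (hpcont.continuousAt (Ioo_mem_nhds hx.1 hx.2))
    exact h.exp
  have hμcont : ContinuousOn μ (Set.Ioo a b2) :=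
    fun x hx => ((hμder x hx).continuousAt).continuousWithinAt
  -- sign dichotomy
  have hsign : (∀ t ∈ Set.Ioo a b2, 0 < ε' * q t) ∨ (∀ t ∈ Set.Ioo a b2, ε' * q t < 0) := by
    have hEcont : ContinuousOn (fun t => ε' * q t) (Set.Icc a b2) := continuousOn_const.mul hqcont
    have hEne : ∀ t ∈ Set.Ioo a b2, ε' * q t ≠ 0 := fun t ht => mul_ne_zero hε'ne (hqne t ht)
    rcases lt_or_gt_of_ne (hEne s₀ hs₀mem) with hneg | hpos
    · right
      intro t ht
      rcases lt_or_gt_of_ne (hEne t ht) with h | h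
      · exact h
      · exfalso
        have hc : ContinuousOn (fun t => ε' * q t) (Set.uIcc t s₀) :=
          hEcont.mono ((Set.ordConnected_Ioo.uIcc_subset ht hs₀mem).trans
            Set.Ioo_subset_Icc_self)
        have h0 : (0:ℝ) ∈ Set.uIcc (ε' * q t) (ε' * q s₀) := by
          rw [Set.mem_uIcc]; right; exact ⟨hneg.le, h.le⟩
        obtain ⟨z, hz, hz0⟩ := intermediate_value_uIcc hc h0
        exact hEne z (Set.ordConnected_Ioo.uIcc_subset ht hs₀mem hz) hz0
    · left
      intro t ht
      rcases lt_or_gt_of_ne (hEne t ht) with h | h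
      · exfalso
        have hc : ContinuousOn (fun t => ε' * q t) (Set.uIcc t s₀) :=
          hEcont.mono ((Set.ordConnected_Ioo.uIcc_subset ht hs₀mem).trans
            Set.Ioo_subset_Icc_self)
        have h0 : (0:ℝ) ∈ Set.uIcc (ε' * q t) (ε' * q s₀) := by
          rw [Set.mem_uIcc]; left; exact ⟨h.le, hpos.le⟩
        obtain ⟨z, hz, hz0⟩ := intermediate_value_uIcc hc h0
        exact hEne z (Set.ordConnected_Ioo.uIcc_subset ht hs₀mem hz) hz0
      · exact h
  rcases hsign with hpos | hneg
  · -- attractive case: basepoint a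
    have hppos : ∀ x ∈ Set.Ioo a b2, 0 < ε' / q x := by
      intro x hx
      have hqx := hqne x hx
      have h1 : ε' / q x = (ε' * q x) / (q x)^2 := by
        field_simp
      rw [h1]
      exact div_pos (hpos x hx) (pow_two_pos_of_ne_zero hqx)
    have hmono : MonotoneOn μ (Set.Ioo a b2) := by
      apply monotoneOn_of_deriv_nonneg (convex_Ioo a b2)
        (fun x hx => (hμder x hx).continuousAt.continuousWithinAt)
      · intro x hx
        rw [interior_Ioo] at hx
        exact (hμder x hx).differentiableAt.differentiableWithinAt
      · intro x hx
        rw [interior_Ioo] at hx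
        rw [(hμder x hx).deriv]
        exact (mul_pos (hμpos x) (hppos x hx)).le
    have hIntH : ∀ (C : ℝ) (f : ℝ → ℝ), ContinuousOn f (Set.Ioo a s₀) →
        (∀ t ∈ Set.Icc a s₀, |f t| ≤ C) →
        ∀ s ∈ Set.Ioc a s₀, IntervalIntegrable (fun t => μ t * f t) volume a s := by
      intro C f hfc hfb s hs
      have hsIoo : s ∈ Set.Ioo a b2 := hIoo hs
      rw [intervalIntegrable_iff_integrableOn_Ioc_of_le hs.1.le]
      have hres : volume.restrict (Set.Ioc a s) = volume.restrict (Set.Ioo a s) :=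
        (MeasureTheory.Measure.restrict_congr_set MeasureTheory.Ioo_ae_eq_Ioc).symm
      unfold MeasureTheory.IntegrableOn
      rw [hres]
      apply MeasureTheory.Integrable.mono' (g := fun _ => μ s * C)
      · exact MeasureTheory.integrableOn_const (hs := measure_Ioo_lt_top.ne)
      · exact ((hμcont.mono (Set.Ioo_subset_Ioo le_rfl hsIoo.2.le)).mul
          (hfc.mono (Set.Ioo_subset_Ioo le_rfl hs.2))).aestronglyMeasurable measurableSet_Ioo
      · rw [MeasureTheory.ae_restrict_iff' measurableSet_Ioo]
        apply MeasureTheory.ae_of_all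
        intro t ht
        rw [Real.norm_eq_abs, abs_mul, abs_of_pos (hμpos t)]
        have h1 : μ t ≤ μ s := hmono (⟨ht.1, ht.2.trans hsIoo.2⟩ : t ∈ Set.Ioo a b2) hsIoo ht.2.le
        exact mul_le_mul h1 (hfb t ⟨ht.1.le, ht.2.le.trans hs.2⟩) (abs_nonneg _) (hμpos s).le
    have hΛint : ∀ s ∈ Set.Ioc a s₀, IntervalIntegrable μ volume a s := by
      intro s hs
      have h := hIntH 1 (fun _ => 1) continuousOn_const (fun t _ => by norm_num) s hs
      simpa [mul_one] using h
    have hΛder : ∀ x ∈ Set.Ioc a s₀, HasDerivAt (fun u => ∫ t in a..u, μ t) (μ x) x := by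
      intro x hx
      exact intervalIntegral.integral_hasDerivAt_right (hΛint x hx)
        (hμcont.stronglyMeasurableAtFilter isOpen_Ioo x (hIoo hx))
        (hμcont.continuousAt (Ioo_mem_nhds (hIoo hx).1 (hIoo hx).2))
    set ψ : ℝ → ℝ := fun u => 2 * ε' * q u * μ u - ∫ t in a..u, μ t with hψdef
    have hψder : ∀ x ∈ Set.Ioc a s₀, HasDerivAt ψ (μ x * (2 * (ε' * D x) + 1)) x := by
      intro x hx
      have hxI := hIoo hx
      have h1 := ((hqder x hxI).const_mul (2*ε')).mul (hμder x hxI)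
      have h2 := h1.sub (hΛder x hx)
      have h3 : 2*ε'*D x*μ x + 2*ε'*q x*(μ x*(ε'/q x)) - μ x = μ x * (2*(ε'*D x)+1) := by
        have hqx := hqne x hxI
        have hqq : q x * (ε' / q x) = ε' := by field_simp
        linear_combination (2 * μ x * ε') * hqq + (2 * μ x) * hε'sq
      rw [h3] at h2
      exact h2
    have hψmono : ∀ t s, t ∈ Set.Ioc a s₀ → s ∈ Set.Ioc a s₀ → t ≤ s → ψ t ≤ ψ s := by
      intro t s ht hs hts
      have hIcc : Set.Icc t s ⊆ Set.Ioc a s₀ := fun z hz =>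
        ⟨lt_of_lt_of_le ht.1 hz.1, hz.2.trans hs.2⟩
      have hm := monotoneOn_of_deriv_nonneg (convex_Icc t s)
        (fun z hz => (hψder z (hIcc hz)).continuousAt.continuousWithinAt)
        (fun z hz => by
          rw [interior_Icc] at hz
          exact (hψder z (hIcc (Set.Ioo_subset_Icc_self hz))).differentiableAt.differentiableWithinAt)
        (fun z hz => by
          rw [interior_Icc] at hz
          have hzI := hIcc (Set.Ioo_subset_Icc_self hz)
          rw [(hψder z hzI).deriv]
          have hd1 := hD z (hIoo hzI)
          have hd2 := hμpos z
          nlinarith)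
      exact hm ⟨le_rfl, hts⟩ ⟨hts, le_rfl⟩ hts
    have hμb : ∀ t ∈ Set.Ioc a s₀, μ t ≤ μ s₀ := fun t ht => hmono (hIoo ht) hs₀mem ht.2
    have hψ0 : ∀ s ∈ Set.Ioc a s₀, 0 ≤ ψ s := by
      intro s hs
      have hne : (nhdsWithin a (Set.Ioo a s)).NeBot := by
        rw [← mem_closure_iff_nhdsWithin_neBot, closure_Ioo (ne_of_lt hs.1)]
        exact ⟨le_rfl, hs.1.le⟩
      have hseq : Set.Ioo a s ⊆ Set.Ioc a s₀ := fun z hz => ⟨hz.1, hz.2.le.trans hs.2⟩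
      have hlim : Tendsto ψ (nhdsWithin a (Set.Ioo a s)) (nhds 0) := by
        apply squeeze_zero_norm' (a := fun t => 2 * |q t| * μ s₀ + μ s₀ * |t - a|)
        · filter_upwards [self_mem_nhdsWithin] with t ht
          have htI : t ∈ Set.Ioc a s₀ := hseq ht
          have h1 : |∫ u in a..t, μ u| ≤ μ s₀ * |t - a| := by
            rw [← Real.norm_eq_abs (∫ u in a..t, μ u)]
            apply intervalIntegral.norm_integral_le_of_norm_le_const
            intro x hx
            rw [Set.uIoc_of_le ht.1.le] at hx
            rw [Real.norm_eq_abs, abs_of_pos (hμpos x)]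
            exact hμb x ⟨hx.1, hx.2.trans htI.2⟩
          have h2 : |2 * ε' * q t * μ t| ≤ 2 * |q t| * μ s₀ := by
            rw [abs_mul, abs_mul, abs_mul, hε'1, abs_of_pos (hμpos t)]
            have h5 : |(2:ℝ)| = 2 := by norm_num
            rw [h5, mul_one]
            have := hμb t htI
            nlinarith [abs_nonneg (q t), hμpos t]
          have h3 : ‖ψ t‖ ≤ |2*ε'*q t*μ t| + |∫ u in a..t, μ u| := by
            rw [hψdef, Real.norm_eq_abs]
            exact abs_sub _ _
          linarith
        · have hq0 : Tendsto q (nhdsWithin a (Set.Ioo a s)) (nhds 0) := by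
            rw [← hqa]
            exact (hqcont a ⟨le_rfl, hab.le⟩).mono_left
              (nhdsWithin_mono a (fun z hz =>
                ⟨hz.1.le, (hz.2.trans (lt_of_le_of_lt hs.2 hs₀b)).le⟩))
          have h4 : Tendsto (fun t => 2 * |q t| * μ s₀) (nhdsWithin a (Set.Ioo a s)) (nhds 0) := by
            have := (hq0.abs.const_mul 2).mul_const (μ s₀)
            simpa using this
          have h5 : Tendsto (fun t => μ s₀ * |t - a|) (nhdsWithin a (Set.Ioo a s)) (nhds 0) := by
            have h6 : Tendsto (fun t : ℝ => t - a) (nhdsWithin a (Set.Ioo a s)) (nhds 0) := by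
              have h7 : Continuous (fun t : ℝ => t - a) := continuous_id.sub continuous_const
              have := (h7.tendsto a).mono_left (nhdsWithin_le_nhds (s := Set.Ioo a s))
              simpa using this
            have := (h6.abs.const_mul (μ s₀))
            simpa using this
          have := h4.add h5
          simpa using this
      have hev : ∀ᶠ t in nhdsWithin a (Set.Ioo a s), ψ t ≤ ψ s := by
        filter_upwards [self_mem_nhdsWithin] with t ht
        exact hψmono t s (hseq ht) hs ht.2.le
      exact le_of_tendsto hlim hev
    have hML : ∀ (M : ℝ) (f : ℝ → ℝ), 0 ≤ M → (∀ t ∈ Set.Icc a s₀, |f t| ≤ M) →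
        (∀ s ∈ Set.Ioc a s₀, IntervalIntegrable (fun t => μ t * f t) volume a s) →
        ∀ s ∈ Set.Ioc a s₀, |∫ t in a..s, μ t * f t| ≤ 2 * M * (|q s| * μ s) := by
      intro M f hM hf hint s hs
      have hΛb : (∫ t in a..s, μ t) ≤ 2 * (|q s| * μ s) := by
        have h0 := hψ0 s hs
        simp only [hψdef] at h0
        have h2 : ε' * q s ≤ |q s| := by
          calc ε' * q s ≤ |ε' * q s| := le_abs_self _
            _ = |q s| := by rw [abs_mul, hε'1, one_mul]
        nlinarith [hμpos s]
      have h1 : |∫ t in a..s, μ t * f t| ≤ ∫ t in a..s, |μ t * f t| :=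
        intervalIntegral.abs_integral_le_integral_abs hs.1.le
      have h2 : (∫ t in a..s, |μ t * f t|) ≤ ∫ t in a..s, M * μ t := by
        apply intervalIntegral.integral_mono_on hs.1.le (hint s hs).abs
          ((hΛint s hs).const_mul M)
        intro t ht
        rw [abs_mul, abs_of_pos (hμpos t)]
        calc μ t * |f t| ≤ μ t * M :=
              mul_le_mul_of_nonneg_left (hf t ⟨ht.1, ht.2.trans hs.2⟩) (hμpos t).le
          _ = M * μ t := mul_comm _ _
      rw [intervalIntegral.integral_const_mul] at h2
      calc |∫ t in a..s, μ t * f t| ≤ M * ∫ t in a..s, μ t := le_trans h1 h2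
        _ ≤ M * (2 * (|q s| * μ s)) := mul_le_mul_of_nonneg_left hΛb hM
        _ = 2 * M * (|q s| * μ s) := by ring
    exact engine a b2 s₀ a ε ε' q μ has hs₀b hε1 hε'1 hqa hqcont hqne hqsmall hμpos hμder
      (fun f hc hb => hIntH 2 f hc hb) hML
  · -- repulsive case: basepoint s₀
    have hpneg : ∀ x ∈ Set.Ioo a b2, ε' / q x < 0 := by
      intro x hx
      have hqx := hqne x hx
      have h1 : ε' / q x = (ε' * q x) / (q x)^2 := by
        field_simp
      rw [h1]
      exact div_neg_of_neg_of_pos (hneg x hx) (pow_two_pos_of_ne_zero hqx)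
    have hanti : AntitoneOn μ (Set.Ioo a b2) := by
      apply antitoneOn_of_deriv_nonpos (convex_Ioo a b2)
        (fun x hx => (hμder x hx).continuousAt.continuousWithinAt)
      · intro x hx
        rw [interior_Ioo] at hx
        exact (hμder x hx).differentiableAt.differentiableWithinAt
      · intro x hx
        rw [interior_Ioo] at hx
        rw [(hμder x hx).deriv]
        exact mul_nonpos_iff.2 (Or.inl ⟨(hμpos x).le, (hpneg x hx).le⟩)
    have hIntH : ∀ (C : ℝ) (f : ℝ → ℝ), ContinuousOn f (Set.Ioo a s₀) →
        (∀ t ∈ Set.Icc a s₀, |f t| ≤ C) →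
        ∀ s ∈ Set.Ioc a s₀, IntervalIntegrable (fun t => μ t * f t) volume s₀ s := by
      intro C f hfc hfb s hs
      have hsIoo : s ∈ Set.Ioo a b2 := hIoo hs
      apply IntervalIntegrable.symm
      rw [intervalIntegrable_iff_integrableOn_Ioc_of_le hs.2]
      have hres : volume.restrict (Set.Ioc s s₀) = volume.restrict (Set.Ioo s s₀) :=
        (MeasureTheory.Measure.restrict_congr_set MeasureTheory.Ioo_ae_eq_Ioc).symm
      unfold MeasureTheory.IntegrableOn
      rw [hres]
      apply MeasureTheory.Integrable.mono' (g := fun _ => μ s * C)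
      · exact MeasureTheory.integrableOn_const (hs := measure_Ioo_lt_top.ne)
      · refine (ContinuousOn.mul (hμcont.mono ?_) (hfc.mono ?_)).aestronglyMeasurable
          measurableSet_Ioo
        · exact fun t ht => ⟨hs.1.trans ht.1, ht.2.trans hs₀b⟩
        · exact fun t ht => ⟨hs.1.trans ht.1, ht.2⟩
      · rw [MeasureTheory.ae_restrict_iff' measurableSet_Ioo]
        apply MeasureTheory.ae_of_all
        intro t ht
        rw [Real.norm_eq_abs, abs_mul, abs_of_pos (hμpos t)]
        have htI : t ∈ Set.Ioo a b2 := ⟨hs.1.trans ht.1, ht.2.trans hs₀b⟩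
        have h1 : μ t ≤ μ s := hanti hsIoo htI ht.1.le
        exact mul_le_mul h1 (hfb t ⟨htI.1.le, ht.2.le⟩) (abs_nonneg _) (hμpos s).le
    have hΛint : ∀ s ∈ Set.Ioc a s₀, IntervalIntegrable μ volume s₀ s := by
      intro s hs
      have h := hIntH 1 (fun _ => 1) continuousOn_const (fun t _ => by norm_num) s hs
      simpa [mul_one] using h
    have hΛder : ∀ x ∈ Set.Ioc a s₀, HasDerivAt (fun u => ∫ t in s₀..u, μ t) (μ x) x := by
      intro x hx
      exact intervalIntegral.integral_hasDerivAt_right (hΛint x hx)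
        (hμcont.stronglyMeasurableAtFilter isOpen_Ioo x (hIoo hx))
        (hμcont.continuousAt (Ioo_mem_nhds (hIoo hx).1 (hIoo hx).2))
    set ψ : ℝ → ℝ := fun u => 2 * ε' * q u * μ u - ∫ t in s₀..u, μ t with hψdef
    have hψder : ∀ x ∈ Set.Ioc a s₀, HasDerivAt ψ (μ x * (2 * (ε' * D x) + 1)) x := by
      intro x hx
      have hxI := hIoo hx
      have h1 := ((hqder x hxI).const_mul (2*ε')).mul (hμder x hxI)
      have h2 := h1.sub (hΛder x hx)
      have h3 : 2*ε'*D x*μ x + 2*ε'*q x*(μ x*(ε'/q x)) - μ x = μ x * (2*(ε'*D x)+1) := by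
        have hqx := hqne x hxI
        have hqq : q x * (ε' / q x) = ε' := by field_simp
        linear_combination (2 * μ x * ε') * hqq + (2 * μ x) * hε'sq
      rw [h3] at h2
      exact h2
    have hψmono : ∀ t s, t ∈ Set.Ioc a s₀ → s ∈ Set.Ioc a s₀ → t ≤ s → ψ t ≤ ψ s := by
      intro t s ht hs hts
      have hIcc : Set.Icc t s ⊆ Set.Ioc a s₀ := fun z hz =>
        ⟨lt_of_lt_of_le ht.1 hz.1, hz.2.trans hs.2⟩
      have hm := monotoneOn_of_deriv_nonneg (convex_Icc t s)
        (fun z hz => (hψder z (hIcc hz)).continuousAt.continuousWithinAt)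
        (fun z hz => by
          rw [interior_Icc] at hz
          exact (hψder z (hIcc (Set.Ioo_subset_Icc_self hz))).differentiableAt.differentiableWithinAt)
        (fun z hz => by
          rw [interior_Icc] at hz
          have hzI := hIcc (Set.Ioo_subset_Icc_self hz)
          rw [(hψder z hzI).deriv]
          have hd1 := hD z (hIoo hzI)
          have hd2 := hμpos z
          nlinarith)
      exact hm ⟨le_rfl, hts⟩ ⟨hts, le_rfl⟩ hts
    have hψ0 : ∀ s ∈ Set.Ioc a s₀, ψ s ≤ 0 := by
      intro s hs
      have h1 : ψ s ≤ ψ s₀ := hψmono s s₀ hs ⟨has, le_rfl⟩ hs.2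
      have h2 : ψ s₀ = 2 * ε' * q s₀ * μ s₀ := by
        simp only [hψdef, intervalIntegral.integral_same, sub_zero]
      have h3 : ε' * q s₀ < 0 := hneg s₀ hs₀mem
      have h4 := hμpos s₀
      nlinarith
    have hML : ∀ (M : ℝ) (f : ℝ → ℝ), 0 ≤ M → (∀ t ∈ Set.Icc a s₀, |f t| ≤ M) →
        (∀ s ∈ Set.Ioc a s₀, IntervalIntegrable (fun t => μ t * f t) volume s₀ s) →
        ∀ s ∈ Set.Ioc a s₀, |∫ t in s₀..s, μ t * f t| ≤ 2 * M * (|q s| * μ s) := by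
      intro M f hM hf hint s hs
      have hΛb : (∫ t in s..s₀, μ t) ≤ 2 * (|q s| * μ s) := by
        have h0 := hψ0 s hs
        simp only [hψdef] at h0
        have hsym : (∫ t in s₀..s, μ t) = -∫ t in s..s₀, μ t :=
          intervalIntegral.integral_symm s s₀
        rw [hsym] at h0
        have h2 : -|q s| ≤ ε' * q s := by
          calc -|q s| = -|ε' * q s| := by rw [abs_mul, hε'1, one_mul]
            _ ≤ ε' * q s := neg_abs_le _
        nlinarith [hμpos s]
      have hsym2 : (∫ t in s₀..s, μ t * f t) = -∫ t in s..s₀, μ t * f t :=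
        intervalIntegral.integral_symm s s₀
      rw [hsym2, abs_neg]
      have h1 : |∫ t in s..s₀, μ t * f t| ≤ ∫ t in s..s₀, |μ t * f t| :=
        intervalIntegral.abs_integral_le_integral_abs hs.2
      have h2 : (∫ t in s..s₀, |μ t * f t|) ≤ ∫ t in s..s₀, M * μ t := by
        apply intervalIntegral.integral_mono_on hs.2 (hint s hs).symm.abs
          ((hΛint s hs).symm.const_mul M)
        intro t ht
        rw [abs_mul, abs_of_pos (hμpos t)]
        calc μ t * |f t| ≤ μ t * M :=
              mul_le_mul_of_nonneg_left (hf t ⟨hs.1.le.trans ht.1, ht.2⟩) (hμpos t).le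
          _ = M * μ t := mul_comm _ _
      rw [intervalIntegral.integral_const_mul] at h2
      calc |∫ t in s..s₀, μ t * f t| ≤ M * ∫ t in s..s₀, μ t := le_trans h1 h2
        _ ≤ M * (2 * (|q s| * μ s)) := mul_le_mul_of_nonneg_left hΛb hM
        _ = 2 * M * (|q s| * μ s) := by ring
    exact engine a b2 s₀ s₀ ε ε' q μ has hs₀b hε1 hε'1 hqa hqcont hqne hqsmall hμpos hμder
      (fun f hc hb => hIntH 2 f hc hb) hML

end BPSaux

/-- Solution to the boundary problem with singularity
`w' = (ε̃ + ε w²)(1 − w h)`, `w(a) = 0`, where `h = 1/q` and `q(a) = 0`. -/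
theorem boundary_problem_singularity_existence
    (a : ℝ) (b : EReal) (hab : (a : EReal) < b)
    (ε ε' : ℝ) (hε : ε = 1 ∨ ε = -1) (hε' : ε' = 1 ∨ ε' = -1)
    (q : ℝ → ℝ)
    (hq : ContDiffOn ℝ 1 q {s : ℝ | a ≤ s ∧ (s : EReal) < b})
    (hqa : q a = 0)
    (hqne : ∀ s : ℝ, a < s → (s : EReal) < b → q s ≠ 0)
    (hq' : 0 ≤ ε' * derivWithin q (Set.Ici a) a) :
    ∃ δ : ℝ, 0 < δ ∧ ((a + δ : ℝ) : EReal) ≤ b ∧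
      ∃ w : ℝ → ℝ,
        ContinuousOn w (Set.Ico a (a + δ)) ∧
        w a = 0 ∧
        ∀ s ∈ Set.Ioo a (a + δ),
          HasDerivAt w ((ε' + ε * w s ^ 2) * (1 - w s * (1 / q s))) s := by
  obtain ⟨b'', hab'', hb''le⟩ : ∃ b'' : ℝ, a < b'' ∧ (b'' : EReal) ≤ b := by
    by_cases hT : b = ⊤
    · exact ⟨a + 1, by linarith, by rw [hT]; exact le_top⟩
    · have hbot : b ≠ ⊥ := (lt_of_le_of_lt bot_le hab).ne'
      refine ⟨b.toReal, ?_, ?_⟩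
      · rw [← EReal.coe_lt_coe_iff]
        rw [EReal.coe_toReal hT hbot]
        exact hab
      · rw [EReal.coe_toReal hT hbot]
  have hε1 : |ε| = 1 := by rcases hε with h | h <;> rw [h] <;> norm_num
  have hε'1 : |ε'| = 1 := by rcases hε' with h | h <;> rw [h] <;> norm_num
  have hSsub : Set.Ico a b'' ⊆ {s : ℝ | a ≤ s ∧ (s : EReal) < b} :=
    fun s hs => ⟨hs.1, lt_of_lt_of_le (EReal.coe_lt_coe_iff.2 hs.2) hb''le⟩
  have hqS : ContDiffOn ℝ 1 q (Set.Ico a b'') := hq.mono hSsub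
  set D : ℝ → ℝ := derivWithin q (Set.Ico a b'') with hDdef
  have hDa : 0 ≤ ε' * D a := by
    have hset : Set.Ico a b'' =ᶠ[nhds a] Set.Ici a := by
      rw [Filter.eventuallyEq_set]
      filter_upwards [Iio_mem_nhds hab''] with x hx
      simp only [Set.mem_Ico, Set.mem_Ici]
      exact ⟨fun h => h.1, fun h => ⟨h, hx⟩⟩
    rw [hDdef]
    rw [derivWithin_congr_set hset]
    exact hq'
  have hDcont : ContinuousOn D (Set.Ico a b'') :=
    hqS.continuousOn_derivWithin (uniqueDiffOn_Ico a b'') le_rfl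
  have hqcont : ContinuousOn q (Set.Ico a b'') := hqS.continuousOn
  have hqder : ∀ s ∈ Set.Ioo a b'', HasDerivAt q (D s) s := by
    intro s hs
    have hmem : Set.Ico a b'' ∈ nhds s :=
      mem_nhds_iff.2 ⟨Set.Ioo a b'', fun z hz => ⟨hz.1.le, hz.2⟩, isOpen_Ioo, hs⟩
    have hdw : DifferentiableWithinAt ℝ q (Set.Ico a b'') s :=
      (hqS.differentiableOn one_ne_zero) s ⟨hs.1.le, hs.2⟩
    have hda : DifferentiableAt ℝ q s := hdw.differentiableAt hmem
    have hD : D s = deriv q s := hda.derivWithin (uniqueDiffOn_Ico a b'' s ⟨hs.1.le, hs.2⟩)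
    rw [hD]
    exact hda.hasDerivAt
  have hamem : a ∈ Set.Ico a b'' := ⟨le_rfl, hab''⟩
  have hev : ∀ᶠ s in nhdsWithin a (Set.Ico a b''),
      |q s| < 1/12 ∧ -(1/2) < ε' * D s := by
    have h1 : Tendsto (fun s => |q s|) (nhdsWithin a (Set.Ico a b'')) (nhds 0) := by
      have h2 := (hqcont a hamem).abs
      rw [ContinuousWithinAt, hqa, abs_zero] at h2
      exact h2
    have h3 : Tendsto (fun s => ε' * D s) (nhdsWithin a (Set.Ico a b'')) (nhds (ε' * D a)) :=
      (continuous_const.continuousWithinAt.mul (hDcont a hamem))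
    exact (h1.eventually_lt_const (by norm_num)).and
      (h3.eventually_const_lt (by linarith))
  have hmemIci : {s : ℝ | |q s| < 1/12 ∧ -(1/2) < ε' * D s} ∈ nhdsWithin a (Set.Ici a) := by
    rw [← nhdsWithin_Ico_eq_nhdsGE hab'']
    exact hev
  obtain ⟨u, hu, hsub⟩ := mem_nhdsGE_iff_exists_Icc_subset.1 hmemIci
  set b2 := min u ((a + b'')/2) with hb2def
  have hab2 : a < b2 := lt_min hu (by linarith)
  have hb2b'' : b2 < b'' := lt_of_le_of_lt (min_le_right _ _) (by linarith)
  have hIccb2 : Set.Icc a b2 ⊆ Set.Icc a u := Set.Icc_subset_Icc le_rfl (min_le_left _ _)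
  have hqcont2 : ContinuousOn q (Set.Icc a b2) :=
    hqcont.mono (fun s hs => ⟨hs.1, lt_of_le_of_lt hs.2 hb2b''⟩)
  have hqder2 : ∀ s ∈ Set.Ioo a b2, HasDerivAt q (D s) s :=
    fun s hs => hqder s ⟨hs.1, hs.2.trans hb2b''⟩
  have hqne2 : ∀ s ∈ Set.Ioo a b2, q s ≠ 0 := fun s hs => hqne s hs.1
    (lt_of_lt_of_le (EReal.coe_lt_coe_iff.2 (hs.2.trans hb2b'')) hb''le)
  have hqsmall2 : ∀ s ∈ Set.Icc a b2, |q s| ≤ 1/12 := fun s hs => (hsub (hIccb2 hs)).1.le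
  have hD2 : ∀ s ∈ Set.Ioo a b2, -(1/2) ≤ ε' * D s :=
    fun s hs => (hsub (hIccb2 ⟨hs.1.le, hs.2.le⟩)).2.le
  obtain ⟨w, hw1, hw2, hw3⟩ := BPSaux.core a b2 ε ε' q D hab2 hε1 hε'1 hqa hqcont2 hqder2
    hqne2 hqsmall2 hD2
  have he : a + (b2 - a)/2 = (a + b2)/2 := by ring
  refine ⟨(b2 - a)/2, by linarith, ?_, w, ?_, hw2, ?_⟩
  · calc ((a + (b2 - a)/2 : ℝ) : EReal) ≤ (b'' : EReal) :=
        EReal.coe_le_coe_iff.2 (by linarith)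
      _ ≤ b := hb''le
  · rw [he]; exact hw1
  · rw [he]; exact hw3
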